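/- Assume K has characteristic 0. Let V be a semilinear representation of H over K and let W ⊆ V be a subrepresentation (an H-invariant K-subspace). Then there exists a subrepresentation W′ ⊆ V such that V = W ⊕ W′ (i.e., W has an H-invariant K-linear complement in V). -/

import Mathlib

/-- A semilinear representation of `H` over `K`: a `K`-vector space `V` with an
action of `H` by additive automorphisms such that `h • (c • v) = (h • c) • (h • v)`. -/
structure SemilinearRep (K H : Type) [Field K] [Group H] [MulSemiringAction H K] where
  carrier : Type
  [isAddCommGroup : AddCommGroup carrier]
  [isModule : Module K carrier]
  [isDistribMulAction : DistribMulAction H carrier]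
  semilinear : ∀ (h : H) (c : K) (v : carrier), h • (c • v) = (h • c) • (h • v)

attribute [instance] SemilinearRep.isAddCommGroup SemilinearRep.isModule
  SemilinearRep.isDistribMulAction

variable {K H : Type} [Field K] [Group H] [MulSemiringAction H K]

/-- An `H`-invariant `K`-subspace (a subrepresentation). -/
def SemilinearRep.IsSubrep (V : SemilinearRep K H) (W : Submodule K V.carrier) : Prop :=
  ∀ (h : H), ∀ w ∈ W, h • w ∈ W

/-- A semilinear representation is simple if it is nonzero and its only
subrepresentations are `⊥` and `⊤`. -/
def SemilinearRep.IsSimple (V : SemilinearRep K H) : Prop :=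
  Nontrivial V.carrier ∧
    ∀ W : Submodule K V.carrier, V.IsSubrep W → W = ⊥ ∨ W = ⊤

/-- Two semilinear representations are isomorphic if there is a bijective
`K`-linear `H`-equivariant map between them. -/
def SemilinearRep.Iso (V W : SemilinearRep K H) : Prop :=
  ∃ e : V.carrier ≃ₗ[K] W.carrier, ∀ (h : H) (v : V.carrier), e (h • v) = h • e v

/-- The kernel `H′` of the action of `H` on `K`. -/
def kerAct (K H : Type) [Field K] [Group H] [MulSemiringAction H K] : Subgroup H where
  carrier := {h : H | ∀ c : K, h • c = c}
  one_mem' := fun c => one_smul H c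
  mul_mem' := by
    intro a b ha hb c
    simp only [Set.mem_setOf_eq] at *
    rw [mul_smul, hb, ha]
  inv_mem' := by
    intro a ha c
    simp only [Set.mem_setOf_eq] at *
    conv_lhs => rw [← ha c]
    rw [inv_smul_smul]

/-- in characteristic 0, every subrepresentation of a semilinear
representation has an `H`-invariant complement. -/
theorem subrep_has_invariant_complement [CharZero K] [Finite H]
    (V : SemilinearRep K H) (W : Submodule K V.carrier) (hW : V.IsSubrep W) :
    ∃ W' : Submodule K V.carrier, V.IsSubrep W' ∧ IsCompl W W' := by
  classical
  haveI : Fintype H := Fintype.ofFinite H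
  obtain ⟨U, hU⟩ := Submodule.exists_isCompl W
  set π : V.carrier →ₗ[K] V.carrier :=
    W.subtype.comp (W.projectionOnto U hU) with hπdef
  have hπW : ∀ w ∈ W, π w = w := fun w hw => by
    simp [hπdef, Submodule.projectionOnto_apply_left hU ⟨w, hw⟩]
  have hπmem : ∀ v, π v ∈ W := fun v => (W.projectionOnto U hU v).2
  set n : K := (Fintype.card H : K) with hn_def
  have hn : n ≠ 0 := Nat.cast_ne_zero.mpr Fintype.card_ne_zero
  set f : V.carrier → V.carrier := fun v => n⁻¹ • ∑ h : H, h⁻¹ • π (h • v) with hf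
  -- basic properties of f
  have hadd : ∀ a b, f (a + b) = f a + f b := by
    intro a b
    have e : ∀ h : H, h⁻¹ • π (h • (a + b)) = h⁻¹ • π (h • a) + h⁻¹ • π (h • b) := by
      intro h; rw [smul_add, map_add, smul_add]
    have e2 : (∑ h : H, h⁻¹ • π (h • (a + b)))
        = ∑ h : H, (h⁻¹ • π (h • a) + h⁻¹ • π (h • b)) :=
      Finset.sum_congr rfl fun h _ => e h
    show n⁻¹ • ∑ h : H, h⁻¹ • π (h • (a + b)) = _
    rw [e2, Finset.sum_add_distrib, smul_add]
  have hsmul : ∀ (c : K) (v : V.carrier), f (c • v) = c • f v := by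
    intro c v
    have e : ∀ h : H, h⁻¹ • π (h • (c • v)) = c • (h⁻¹ • π (h • v)) := by
      intro h
      rw [V.semilinear h c v, map_smul, V.semilinear h⁻¹, inv_smul_smul]
    simp only [hf, e, ← Finset.smul_sum]
    rw [smul_comm]
  have hmemW : ∀ v, f v ∈ W := by
    intro v
    refine W.smul_mem _ (Submodule.sum_mem _ fun h _ => ?_)
    exact hW h⁻¹ _ (hπmem _)
  have hid : ∀ w ∈ W, f w = w := by
    intro w hw
    have e : ∀ h : H, h⁻¹ • π (h • w) = w := by
      intro h
      rw [hπW _ (hW h w hw), inv_smul_smul]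
    rw [hf]
    simp only [e, Finset.sum_const, Finset.card_univ]
    rw [← Nat.cast_smul_eq_nsmul K, smul_smul, inv_mul_cancel₀ hn, one_smul]
  have hequiv : ∀ (g : H) (v : V.carrier), f (g • v) = g • f v := by
    intro g v
    have hninv : g • (n⁻¹ : K) = n⁻¹ := by
      have h1 : g • (n : K) = n :=
        map_natCast (MulSemiringAction.toRingHom H K g) (Fintype.card H)
      have h2 : g • (n⁻¹ : K) = (g • n)⁻¹ :=
        map_inv₀ (MulSemiringAction.toRingHom H K g) n
      rw [h2, h1]
    show n⁻¹ • ∑ h : H, h⁻¹ • π (h • (g • v)) = g • (n⁻¹ • ∑ h : H, h⁻¹ • π (h • v))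
    rw [V.semilinear g, hninv]
    congr 1
    rw [Finset.smul_sum]
    refine (Fintype.sum_equiv (Equiv.mulRight g⁻¹)
      (fun x => g • (x⁻¹ • π (x • v))) _ ?_).symm
    intro x
    simp only [Equiv.coe_mulRight]
    have e1 : (x * g⁻¹) • (g • v) = x • v := by
      rw [← mul_smul, mul_assoc, inv_mul_cancel, mul_one]
    rw [e1, mul_inv_rev, inv_inv, mul_smul]
  have hf0 : f 0 = 0 := by
    have := hsmul 0 0; simpa using this
  -- the complement
  set W' : Submodule K V.carrier :=
    { carrier := {v | f v = 0}
      zero_mem' := hf0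
      add_mem' := fun {a b} ha hb => by
        have ha' : f a = 0 := ha
        have hb' : f b = 0 := hb
        show f (a + b) = 0
        rw [hadd, ha', hb', add_zero]
      smul_mem' := fun c v hv => by
        have hv' : f v = 0 := hv
        show f (c • v) = 0
        rw [hsmul, hv', smul_zero] } with hW'
  have hmem' : ∀ v, v ∈ W' ↔ f v = 0 := fun v => Iff.rfl
  refine ⟨W', ?_, ?_⟩
  · intro h w hw
    refine (hmem' _).mpr ?_
    rw [hequiv, (hmem' w).mp hw, smul_zero]
  · rw [isCompl_iff]
    constructor
    · rw [Submodule.disjoint_def]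
      intro v hvW hvK
      rw [hmem'] at hvK
      rw [← hid v hvW, hvK]
    · rw [codisjoint_iff_le_sup]
      intro v _
      refine Submodule.mem_sup.mpr ⟨f v, hmemW v, v - f v, ?_, by abel⟩
      rw [hmem']
      have e2 : f (v - f v) = f v - f (f v) := by
        have h3 : f (v - f v + f v) = f (v - f v) + f (f v) := hadd _ _
        rw [sub_add_cancel] at h3
        rw [eq_sub_iff_add_eq, ← h3]
      rw [e2, hid (f v) (hmemW v), sub_self]
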